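/- Let A, B ∈ M_{4×2}(ℂ) be such that the span of the columns of A together with the columns of B is 3-dimensional, A : ℂ² → ℂ⁴ is not injective, and for every (z₀, z₁) ∈ ℂ² with z₁ ≠ 0 the map z₀A + z₁B : ℂ² → ℂ⁴ is injective. Then there exist G ∈ GL(4, ℂ) and g ∈ GL(2, ℂ) such that G·A·g = A₀ and G·B·g = B₀, where A₀ has rows (0,1), (0,0), (0,0), (0,0) and B₀ has rows (0,0), (1,0), (0,1), (0,0). -/

import Mathlib

open Matrix

/-- normal form (4.36), Case (iii) of Theorem 4.30. If the columns of
`A` and `B` together span a 3-dimensional subspace of `ℂ⁴`, `A` itself is not injective,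
but every member `z₀A + z₁B` of the pencil with `z₁ ≠ 0` is injective, then `(A, B)` can
be brought to the standard form by the `GL(4,ℂ) × GL(2,ℂ)`-action. -/
theorem pencil_normal_form_case_iii
    (A B : Matrix (Fin 4) (Fin 2) ℂ)
    (hrank : Module.finrank ℂ
      (Submodule.span ℂ (Set.range Aᵀ ∪ Set.range Bᵀ)) = 3)
    (hA : ¬ Function.Injective A.mulVec)
    (hinj : ∀ z₀ z₁ : ℂ, z₁ ≠ 0 → Function.Injective ((z₀ • A + z₁ • B).mulVec)) :
    ∃ (G : Matrix.GeneralLinearGroup (Fin 4) ℂ) (g : Matrix.GeneralLinearGroup (Fin 2) ℂ),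
      (G : Matrix (Fin 4) (Fin 4) ℂ) * A * (g : Matrix (Fin 2) (Fin 2) ℂ) =
        !![0, 1; 0, 0; 0, 0; 0, 0] ∧
      (G : Matrix (Fin 4) (Fin 4) ℂ) * B * (g : Matrix (Fin 2) (Fin 2) ℂ) =
        !![0, 0; 1, 0; 0, 1; 0, 0] := by
  clear hinj
  obtain ⟨x, y, hxy, hne⟩ : ∃ x y, A.mulVec x = A.mulVec y ∧ x ≠ y := by
    by_contra h
    push_neg at h
    exact hA fun x y hxy => h x y hxy
  set v : Fin 2 → ℂ := x - y with hv
  have hv0 : v ≠ 0 := sub_ne_zero.mpr hne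
  have hAv : A.mulVec v = 0 := by
    rw [hv, Matrix.mulVec_sub, hxy, sub_self]
  have hvlt : Submodule.span ℂ ({v} : Set (Fin 2 → ℂ)) < ⊤ := by
    rw [lt_top_iff_ne_top]
    intro h
    have h1 : Module.finrank ℂ (Submodule.span ℂ ({v} : Set (Fin 2 → ℂ))) = 1 :=
      finrank_span_singleton hv0
    rw [h] at h1
    simp [finrank_top] at h1
  obtain ⟨w, -, hw⟩ := SetLike.exists_of_lt hvlt
  have hvw : LinearIndependent ℂ ![v, w] := by
    rw [linearIndependent_fin2]
    constructor
    · simp only [Matrix.cons_val_one, Matrix.head_cons, Matrix.cons_val_zero]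
      intro h
      exact hw (h ▸ Submodule.zero_mem _)
    · intro t ht
      simp only [Matrix.cons_val_one, Matrix.head_cons, Matrix.cons_val_zero] at ht
      rcases eq_or_ne t 0 with rfl | ht0
      · rw [zero_smul] at ht; exact hv0 ht.symm
      · apply hw
        have hwv : w = t⁻¹ • v := by rw [← ht, smul_smul, inv_mul_cancel₀ ht0, one_smul]
        rw [hwv]
        exact Submodule.smul_mem _ _ (Submodule.mem_span_singleton_self v)
  have hcard2 : Fintype.card (Fin 2) = Module.finrank ℂ (Fin 2 → ℂ) := by simp
  have hspan2 : Submodule.span ℂ (Set.range ![v, w]) = ⊤ := by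
    have h := (basisOfLinearIndependentOfCardEqFinrank hvw hcard2).span_eq
    rwa [coe_basisOfLinearIndependentOfCardEqFinrank] at h
  set a : Fin 4 → ℂ := A.mulVec w with ha
  set b₀ : Fin 4 → ℂ := B.mulVec v with hb₀
  set b₁ : Fin 4 → ℂ := B.mulVec w with hb₁
  set S : Submodule ℂ (Fin 4 → ℂ) := Submodule.span ℂ (Set.range ![a, b₀, b₁]) with hS
  have haS : a ∈ S := Submodule.subset_span ⟨0, rfl⟩
  have hb₀S : b₀ ∈ S := Submodule.subset_span ⟨1, rfl⟩
  have hb₁S : b₁ ∈ S := Submodule.subset_span ⟨2, rfl⟩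
  have hmemA : ∀ z : Fin 2 → ℂ, A.mulVec z ∈ S := by
    intro z
    have hz : z ∈ Submodule.span ℂ (Set.range ![v, w]) := hspan2 ▸ Submodule.mem_top
    induction hz using Submodule.span_induction with
    | mem t ht =>
      obtain ⟨i, rfl⟩ := ht
      fin_cases i
      · simpa [hAv] using S.zero_mem
      · exact haS
    | zero => simpa [Matrix.mulVec_zero] using S.zero_mem
    | add s t _ _ hs ht => rw [Matrix.mulVec_add]; exact S.add_mem hs ht
    | smul r t _ ht => rw [Matrix.mulVec_smul]; exact S.smul_mem r ht
  have hmemB : ∀ z : Fin 2 → ℂ, B.mulVec z ∈ S := by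
    intro z
    have hz : z ∈ Submodule.span ℂ (Set.range ![v, w]) := hspan2 ▸ Submodule.mem_top
    induction hz using Submodule.span_induction with
    | mem t ht =>
      obtain ⟨i, rfl⟩ := ht
      fin_cases i
      · exact hb₀S
      · exact hb₁S
    | zero => simpa [Matrix.mulVec_zero] using S.zero_mem
    | add s t _ _ hs ht => rw [Matrix.mulVec_add]; exact S.add_mem hs ht
    | smul r t _ ht => rw [Matrix.mulVec_smul]; exact S.smul_mem r ht
  have hTS : Submodule.span ℂ (Set.range Aᵀ ∪ Set.range Bᵀ) = S := by
    apply le_antisymm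
    · rw [Submodule.span_le]
      rintro t (⟨j, rfl⟩ | ⟨j, rfl⟩)
      · have hcol : Aᵀ j = A.mulVec (Pi.single j 1) := by
          ext i
          simp [Matrix.mulVec_single]
        rw [hcol]; exact hmemA _
      · have hcol : Bᵀ j = B.mulVec (Pi.single j 1) := by
          ext i
          simp [Matrix.mulVec_single]
        rw [hcol]; exact hmemB _
    · rw [hS, Submodule.span_le]
      rintro t ⟨i, rfl⟩
      have hsub : ∀ (C : Matrix (Fin 4) (Fin 2) ℂ) (z : Fin 2 → ℂ),
          C.mulVec z ∈ Submodule.span ℂ (Set.range Cᵀ) := by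
        intro C z
        change C.mulVec z ∈ Submodule.span ℂ (Set.range C.col)
        rw [← Matrix.range_mulVecLin]
        exact ⟨z, rfl⟩
      fin_cases i
      · exact Submodule.span_mono Set.subset_union_left (hsub A w)
      · exact Submodule.span_mono Set.subset_union_right (hsub B v)
      · exact Submodule.span_mono Set.subset_union_right (hsub B w)
  have hSrank : Module.finrank ℂ S = 3 := by rw [← hTS]; exact hrank
  have habb : LinearIndependent ℂ ![a, b₀, b₁] := by
    rw [linearIndependent_iff_card_eq_finrank_span, Set.finrank, ← hS, hSrank]
    simp
  have hSlt : S < ⊤ := by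
    rw [lt_top_iff_ne_top]
    intro h
    rw [h] at hSrank
    simp [finrank_top] at hSrank
  obtain ⟨u, -, hu⟩ := SetLike.exists_of_lt hSlt
  set c : Fin 4 → (Fin 4 → ℂ) := ![a, b₀, b₁, u] with hc
  have hcsnoc : c = Fin.snoc ![a, b₀, b₁] u := by
    funext i
    fin_cases i <;> rfl
  have hcind : LinearIndependent ℂ c := by
    rw [hcsnoc, linearIndependent_fin_snoc]
    exact ⟨habb, fun h => hu (hS ▸ h)⟩
  have hcard4 : Fintype.card (Fin 4) = Module.finrank ℂ (Fin 4 → ℂ) := by simp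
  have hspan4 : Submodule.span ℂ (Set.range c) = ⊤ := by
    have h := (basisOfLinearIndependentOfCardEqFinrank hcind hcard4).span_eq
    rwa [coe_basisOfLinearIndependentOfCardEqFinrank] at h
  set M : Matrix (Fin 4) (Fin 4) ℂ := Matrix.of fun i j => c j i with hM
  set P : Matrix (Fin 2) (Fin 2) ℂ := Matrix.of fun i j => ![v, w] j i with hP
  have hMunit : IsUnit M := by
    have hr : Set.range M.col = Set.range c := rfl
    have h1 : Function.Surjective M.mulVecLin := LinearMap.range_eq_top.mp
      (by rw [Matrix.range_mulVecLin, hr, hspan4])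
    exact Matrix.mulVec_surjective_iff_isUnit.mp h1
  have hPunit : IsUnit P := by
    have hr : Set.range P.col = Set.range ![v, w] := rfl
    have h1 : Function.Surjective P.mulVecLin := LinearMap.range_eq_top.mp
      (by rw [Matrix.range_mulVecLin, hr, hspan2])
    exact Matrix.mulVec_surjective_iff_isUnit.mp h1
  -- entrywise facts
  have hAv' : ∀ i, A i 0 * v 0 + A i 1 * v 1 = 0 := by
    intro i
    simpa [Matrix.mulVec, dotProduct, Fin.sum_univ_two] using congrFun hAv i
  have ha' : ∀ i, A i 0 * w 0 + A i 1 * w 1 = a i := by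
    intro i
    simp [ha, Matrix.mulVec, dotProduct, Fin.sum_univ_two]
  have hb₀' : ∀ i, B i 0 * v 0 + B i 1 * v 1 = b₀ i := by
    intro i
    simp [hb₀, Matrix.mulVec, dotProduct, Fin.sum_univ_two]
  have hb₁' : ∀ i, B i 0 * w 0 + B i 1 * w 1 = b₁ i := by
    intro i
    simp [hb₁, Matrix.mulVec, dotProduct, Fin.sum_univ_two]
  have keyA : A * P = M * (!![0, 1; 0, 0; 0, 0; 0, 0] : Matrix (Fin 4) (Fin 2) ℂ) := by
    ext i j
    fin_cases j <;>
      simp [hM, hP, hc, Matrix.mul_apply, Fin.sum_univ_two, Fin.sum_univ_four,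
        Matrix.vecHead, Matrix.vecTail]
    · exact hAv' i
    · exact ha' i
  have keyB : B * P = M * (!![0, 0; 1, 0; 0, 1; 0, 0] : Matrix (Fin 4) (Fin 2) ℂ) := by
    ext i j
    fin_cases j <;>
      simp [hM, hP, hc, Matrix.mul_apply, Fin.sum_univ_two, Fin.sum_univ_four,
        Matrix.vecHead, Matrix.vecTail]
    · exact hb₀' i
    · exact hb₁' i
  refine ⟨hMunit.unit⁻¹, hPunit.unit, ?_, ?_⟩
  · rw [Matrix.mul_assoc, hPunit.unit_spec, keyA, ← Matrix.mul_assoc, hMunit.val_inv_mul, Matrix.one_mul]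
  · rw [Matrix.mul_assoc, hPunit.unit_spec, keyB, ← Matrix.mul_assoc, hMunit.val_inv_mul, Matrix.one_mul]
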